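/- Let q be a prime power, k ≥ 2, 1 ≤ h ≤ k, and let W_1, …, W_N be pairwise distinct h-dimensional F_q-subspaces of F_q^k such that W_1 ∪ … ∪ W_N is a strong blocking set in F_q^k. Then N ≥ ⌊(k−1)/h⌋ + ⌈k/h⌉. -/

import Mathlib

open Module Submodule

/-- Separating functional: given `a ∉ C`, there is a linear functional vanishing on `C`
but not at `a`. -/
lemma sbs_exists_functional {K V : Type*} [Field K] [AddCommGroup V] [Module K V]
    (C : Submodule K V) {a : V} (ha : a ∉ C) :
    ∃ φ : V →ₗ[K] K, C ≤ LinearMap.ker φ ∧ φ a ≠ 0 := by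
  have h0 : Submodule.Quotient.mk (p := C) a ≠ 0 := by
    simpa [Submodule.Quotient.mk_eq_zero] using ha
  obtain ⟨g, hg⟩ : ∃ g : Module.Dual K (V ⧸ C), g (Submodule.Quotient.mk a) ≠ 0 := by
    by_contra hcon
    push_neg at hcon
    exact h0 ((Module.forall_dual_apply_eq_zero_iff K _).1 hcon)
  refine ⟨g ∘ₗ C.mkQ, fun x hx => ?_, by simpa using hg⟩
  simp [LinearMap.mem_ker, (Submodule.Quotient.mk_eq_zero _).2 hx]

/-- The kernel of a nonzero functional has corank one. -/
lemma sbs_finrank_ker {K V : Type*} [Field K] [AddCommGroup V] [Module K V]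
    [FiniteDimensional K V] (φ : V →ₗ[K] K) {a : V} (ha : φ a ≠ 0) :
    finrank K (LinearMap.ker φ) + 1 = finrank K V := by
  have hr : LinearMap.range φ = ⊤ := by
    rw [LinearMap.range_eq_top]
    intro c
    refine ⟨(c * (φ a)⁻¹) • a, ?_⟩
    rw [map_smul, smul_eq_mul, mul_assoc, inv_mul_cancel₀ ha, mul_one]
  have h := LinearMap.finrank_range_add_finrank_ker φ
  rw [hr, finrank_top, Module.finrank_self] at h
  omega

/-- Intersecting with a hyperplane not containing a subspace drops its dimension by one. -/
lemma sbs_finrank_inf {K V : Type*} [Field K] [AddCommGroup V] [Module K V]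
    [FiniteDimensional K V] {A H : Submodule K V}
    (hH : finrank K H + 1 = finrank K V) (hAH : ¬ A ≤ H) :
    finrank K ↥(A ⊓ H) + 1 = finrank K ↥A := by
  have hlt : H < A ⊔ H := lt_of_le_of_ne le_sup_right (by
    intro he
    exact hAH (he ▸ (le_sup_left : A ≤ A ⊔ H)))
  have h1 : finrank K H < finrank K (A ⊔ H : Submodule K V) :=
    Submodule.finrank_lt_finrank_of_lt hlt
  have h2 : finrank K (A ⊔ H : Submodule K V) ≤ finrank K V := Submodule.finrank_le _
  have htop : A ⊔ H = ⊤ := Submodule.eq_top_of_finrank_eq (by omega)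
  have h3 := Submodule.finrank_sup_add_finrank_inf_eq A H
  rw [htop, finrank_top] at h3
  omega

/-- The dimension of a finite sup of subspaces of dimension at most `h` is at most
`card * h`. -/
lemma sbs_finrank_finset_sup_le {K V ι : Type*} [Field K] [AddCommGroup V] [Module K V]
    [FiniteDimensional K V] [DecidableEq ι] (S : Finset ι) (W : ι → Submodule K V) (h : ℕ)
    (hW : ∀ i, finrank K (W i) ≤ h) :
    finrank K (S.sup W : Submodule K V) ≤ S.card * h := by
  classical
  induction S using Finset.induction_on with
  | empty => simp
  | @insert a S hni ih =>
    rw [Finset.sup_insert, Finset.card_insert_of_notMem hni]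
    have h1 : finrank K (W a ⊔ S.sup W : Submodule K V)
        ≤ finrank K (W a) + finrank K (S.sup W : Submodule K V) := by
      have := Submodule.finrank_sup_add_finrank_inf_eq (W a) (S.sup W)
      omega
    calc finrank K (W a ⊔ S.sup W : Submodule K V)
        ≤ finrank K (W a) + finrank K (S.sup W : Submodule K V) := h1
      _ ≤ h + S.card * h := Nat.add_le_add (hW a) ih
      _ = (S.card + 1) * h := by ring

/-- The number of pairwise distinct `h`-dimensional subspaces of `F_q^k` whose union is a
strong blocking set is at least `⌊(k-1)/h⌋ + ⌈k/h⌉`. -/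
theorem stmt_7 (q k h N : ℕ) (hq : IsPrimePow q) (hk : 2 ≤ k) (hh1 : 1 ≤ h) (hhk : h ≤ k)
    (F : Type) [Field F] [Fintype F] (hcard : Fintype.card F = q)
    (W : Fin N → Submodule F (Fin k → F))
    (hdim : ∀ i, Module.finrank F (W i) = h)
    (hdistinct : Function.Injective W)
    (hSBS : ∀ H : Submodule F (Fin k → F), Module.finrank F H = k - 1 →
      Submodule.span F ((⋃ i, (W i : Set (Fin k → F))) ∩ (H : Set (Fin k → F))) = H) :
    (k - 1) / h + k ⌈/⌉ h ≤ N := by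
  classical
  have hkV : finrank F (Fin k → F) = k := Module.finrank_fin_fun F
  set m := (k - 1) / h with hm
  have hceil : k ⌈/⌉ h = m + 1 := by
    rw [Nat.ceilDiv_eq_add_pred_div]
    have hkh : k + h - 1 = (k - 1) + h := by omega
    rw [hkh, Nat.add_div_right _ (by omega : 0 < h)]
  rw [hceil]
  by_contra hN
  push_neg at hN
  have hN2 : N ≤ 2 * m := by omega
  have hmh : m * h ≤ k - 1 := Nat.div_mul_le_self _ _
  -- Split the family into two halves, each spanning a proper subspace.
  set Sa : Finset (Fin N) := Finset.univ.filter (fun i => (i : ℕ) < m) with hSa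
  set Sb : Finset (Fin N) := Finset.univ.filter (fun i => ¬ (i : ℕ) < m) with hSb
  have hcarda : Sa.card ≤ m := by
    have : Sa.card ≤ (Finset.range m).card := by
      apply Finset.card_le_card_of_injOn (fun i => i.val)
      · intro i hi
        simp only [hSa, Finset.mem_filter, Finset.mem_univ, true_and] at hi
        simpa using hi
      · intro i _ j _ hij
        exact Fin.ext hij
    simpa using this
  have hcardb : Sb.card ≤ m := by
    have : Sb.card ≤ (Finset.range m).card := by
      apply Finset.card_le_card_of_injOn (fun i => i.val - m)
      · intro i hi
        simp only [hSb, Finset.coe_filter, Set.mem_setOf_eq, Finset.mem_coe, Finset.mem_filter, Finset.mem_univ, true_and] at hi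
        have := i.isLt
        simp only [Finset.coe_range, Set.mem_Iio, Finset.mem_coe, Finset.mem_range]
        omega
      · intro i hi j hj hij
        simp only [hSb, Finset.coe_filter, Set.mem_setOf_eq, Finset.mem_coe,
          Finset.mem_filter, Finset.mem_univ, true_and] at hi hj
        have hij' : i.val - m = j.val - m := hij
        exact Fin.ext (by omega)
    simpa using this
  set A := Sa.sup W with hA
  set B := Sb.sup W with hB
  have hWle : ∀ i, finrank F (W i) ≤ h := fun i => (hdim i).le
  have hdA : finrank F A ≤ k - 1 :=
    le_trans (sbs_finrank_finset_sup_le Sa W h hWle)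
      (le_trans (Nat.mul_le_mul_right h hcarda) hmh)
  have hdB : finrank F B ≤ k - 1 :=
    le_trans (sbs_finrank_finset_sup_le Sb W h hWle)
      (le_trans (Nat.mul_le_mul_right h hcardb) hmh)
  have hcover : ∀ i, W i ≤ A ∨ W i ≤ B := by
    intro i
    by_cases hi : (i : ℕ) < m
    · exact Or.inl (Finset.le_sup (by simp [hSa, hi]))
    · refine Or.inr (Finset.le_sup ?_)
      simp only [hSb, Finset.mem_filter, Finset.mem_univ, true_and]
      exact hi
  have hspanle : ∀ H : Submodule F (Fin k → F),
      Submodule.span F ((⋃ i, (W i : Set (Fin k → F))) ∩ (H : Set (Fin k → F)))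
        ≤ (A ⊓ H) ⊔ (B ⊓ H) := by
    intro H
    rw [Submodule.span_le]
    rintro x ⟨hxU, hxH⟩
    simp only [Set.mem_iUnion, SetLike.mem_coe] at hxU hxH
    obtain ⟨i, hxi⟩ := hxU
    rcases hcover i with hle | hle
    · exact Submodule.mem_sup_left ⟨hle hxi, hxH⟩
    · exact Submodule.mem_sup_right ⟨hle hxi, hxH⟩
  by_cases hE : A ⊔ B = ⊤
  · -- Main case: the two halves together span everything.
    have hBne : B ≠ ⊤ := by
      intro hBtop
      rw [hBtop, finrank_top, hkV] at hdB
      omega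
    have hAne : A ≠ ⊤ := by
      intro hAtop
      rw [hAtop, finrank_top, hkV] at hdA
      omega
    obtain ⟨a, haA, haB⟩ : ∃ a, a ∈ A ∧ a ∉ B := by
      by_contra hcon
      push_neg at hcon
      exact hBne (top_unique (hE ▸ sup_le (fun x hx => hcon x hx) le_rfl))
    obtain ⟨b, hbB, hbA⟩ : ∃ b, b ∈ B ∧ b ∉ A := by
      by_contra hcon
      push_neg at hcon
      exact hAne (top_unique (hE ▸ sup_le le_rfl (fun x hx => hcon x hx)))
    set C := A ⊓ B with hC
    have haC : a ∉ C := fun hmem => haB hmem.2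
    have hbC : b ∉ C := fun hmem => hbA hmem.1
    obtain ⟨φ₁, hφ₁C, hφ₁a⟩ := sbs_exists_functional C haC
    obtain ⟨φ₂, hφ₂C, hφ₂b⟩ := sbs_exists_functional C hbC
    obtain ⟨φ, hφC, hφa, hφb⟩ :
        ∃ φ : (Fin k → F) →ₗ[F] F, C ≤ LinearMap.ker φ ∧ φ a ≠ 0 ∧ φ b ≠ 0 := by
      by_cases h1 : φ₁ b ≠ 0
      · exact ⟨φ₁, hφ₁C, hφ₁a, h1⟩
      by_cases h2 : φ₂ a ≠ 0
      · exact ⟨φ₂, hφ₂C, h2, hφ₂b⟩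
      push_neg at h1 h2
      refine ⟨φ₁ + φ₂, fun x hx => ?_, ?_, ?_⟩
      · have e1 : φ₁ x = 0 := hφ₁C hx
        have e2 : φ₂ x = 0 := hφ₂C hx
        simp [LinearMap.mem_ker, e1, e2]
      · simpa [h2] using hφ₁a
      · simpa [h1] using hφ₂b
    set H := LinearMap.ker φ with hHdef
    have hH : finrank F ↥H + 1 = k := by
      have h0 := sbs_finrank_ker φ hφa
      rw [hkV] at h0
      exact h0
    have hspan := hSBS H (by omega)
    have haH : a ∉ H := by simpa [hHdef, LinearMap.mem_ker] using hφa
    have hbH : b ∉ H := by simpa [hHdef, LinearMap.mem_ker] using hφb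
    have hAnle : ¬ A ≤ H := fun hl => haH (hl haA)
    have hBnle : ¬ B ≤ H := fun hl => hbH (hl hbB)
    have e1 : finrank F ↥(A ⊓ H) + 1 = finrank F ↥A :=
      sbs_finrank_inf (by rw [hkV]; exact hH) hAnle
    have e2 : finrank F ↥(B ⊓ H) + 1 = finrank F ↥B :=
      sbs_finrank_inf (by rw [hkV]; exact hH) hBnle
    have e3 := Submodule.finrank_sup_add_finrank_inf_eq A B
    rw [hE, finrank_top, hkV, ← hC] at e3
    have e4 := Submodule.finrank_sup_add_finrank_inf_eq (A ⊓ H) (B ⊓ H)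
    have hCeq : (A ⊓ H) ⊓ (B ⊓ H) = C := by
      have hCH : C ≤ H := hφC
      apply le_antisymm
      · exact le_inf (inf_le_left.trans inf_le_left) (inf_le_right.trans inf_le_left)
      · exact le_inf (le_inf inf_le_left hCH) (le_inf inf_le_right hCH)
    rw [hCeq] at e4
    have hfin : finrank F H ≤ finrank F ((A ⊓ H) ⊔ (B ⊓ H) : Submodule F (Fin k → F)) :=
      Submodule.finrank_mono (hspan.ge.trans (hspanle H))
    omega
  · -- Degenerate case: the union does not even span the whole space.
    by_cases hEbot : A ⊔ B = ⊥
    · haveI : Nonempty (Fin k) := ⟨⟨0, by omega⟩⟩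
      obtain ⟨v, hv⟩ := exists_ne (0 : Fin k → F)
      obtain ⟨φ, _, hφv⟩ :=
        sbs_exists_functional (⊥ : Submodule F (Fin k → F)) (by simpa using hv)
      set H := LinearMap.ker φ with hHdef
      have hH : finrank F ↥H + 1 = k := by
        have h0 := sbs_finrank_ker φ hφv
        rw [hkV] at h0
        exact h0
      have hspan := hSBS H (by omega)
      have hle : H ≤ (⊥ : Submodule F (Fin k → F)) := by
        refine le_trans (hspan.ge.trans (hspanle H)) ?_
        rw [← hEbot]
        exact sup_le (inf_le_left.trans le_sup_left) (inf_le_left.trans le_sup_right)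
      have : H = ⊥ := le_bot_iff.1 hle
      rw [this, finrank_bot] at hH
      omega
    · obtain ⟨v, hvE, hv0⟩ := Submodule.exists_mem_ne_zero_of_ne_bot hEbot
      obtain ⟨φ, _, hφv⟩ :=
        sbs_exists_functional (⊥ : Submodule F (Fin k → F)) (by simpa using hv0)
      set H := LinearMap.ker φ with hHdef
      have hH : finrank F ↥H + 1 = k := by
        have h0 := sbs_finrank_ker φ hφv
        rw [hkV] at h0
        exact h0
      have hspan := hSBS H (by omega)
      have hEnle : ¬ A ⊔ B ≤ H := fun hl => by
        have : v ∈ H := hl hvE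
        simp [hHdef, LinearMap.mem_ker] at this
        exact hφv this
      have eE : finrank F ↥((A ⊔ B) ⊓ H) + 1 = finrank F ↥(A ⊔ B) :=
        sbs_finrank_inf (by rw [hkV]; exact hH) hEnle
      have hElt : finrank F ↥(A ⊔ B) < k := by
        have h0 := Submodule.finrank_lt (K := F) (V := Fin k → F) hE
        rw [hkV] at h0
        exact h0
      have hfin : finrank F H ≤ finrank F ((A ⊔ B) ⊓ H : Submodule F (Fin k → F)) := by
        refine Submodule.finrank_mono ?_
        refine le_trans (hspan.ge.trans (hspanle H)) ?_
        exact sup_le (le_inf (inf_le_left.trans le_sup_left) inf_le_right)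
          (le_inf (inf_le_left.trans le_sup_right) inf_le_right)
      omega
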